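/- Let A ∈ ℂ^{n×n} and let p_max denote the maximum over all eigenvalues λ of A of the geometric multiplicity dim ker(λI − A). Then there exists C ∈ ℂ^{m×n} with (A, C) observable in the PBH sense if and only if m ≥ p_max. -/
import Mathlib

open Matrix

section Aux

open Module Submodule

lemma pbh_avoid {E : Type*} [AddCommGroup E] [Module ℂ E] {ι : Type*} [Finite ι]
    (p : ι → Submodule ℂ E) (h : ∀ i, p i ≠ ⊤) : ∃ v : E, ∀ i, v ∉ p i := by
  by_contra hc
  push_neg at hc
  have : ⋃ i, ((p i : Set E)) = Set.univ := by
    ext v; simp only [Set.mem_iUnion, Set.mem_univ, iff_true]; exact hc v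
  obtain ⟨i, hi⟩ := Subspace.exists_eq_top_of_iUnion_eq_univ this
  exact h i hi

lemma pbh_buildW {E : Type*} [AddCommGroup E] [Module ℂ E] [FiniteDimensional ℂ E]
    {ι : Type*} [Finite ι] (V : ι → Submodule ℂ E) :
    ∀ d : ℕ, d ≤ finrank ℂ E → (∀ i, finrank ℂ (V i) + d ≤ finrank ℂ E) →
    ∃ W : Submodule ℂ E, finrank ℂ W = d ∧ ∀ i, W ⊓ V i = ⊥ := by
  haveI := Fintype.ofFinite ι
  intro d
  induction d with
  | zero => exact fun _ _ => ⟨⊥, finrank_bot ℂ E, fun i => bot_inf_eq _⟩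
  | succ d ih =>
    intro hd hV
    obtain ⟨W, hWrank, hWV⟩ := ih (by omega) (fun i => by have := hV i; omega)
    set q : Option ι → Submodule ℂ E := fun o => o.elim W (fun i => W ⊔ V i) with hq
    have hne : ∀ o : Option ι, q o ≠ ⊤ := by
      rintro (_ | i) htop
      · simp only [hq, Option.elim] at htop
        rw [htop, finrank_top] at hWrank; omega
      · simp only [hq, Option.elim] at htop
        have h1 := Submodule.finrank_sup_add_finrank_inf_eq W (V i)
        rw [htop, finrank_top] at h1
        have h2 : finrank ℂ ((W ⊓ V i : Submodule ℂ E)) = 0 := by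
          rw [hWV i]; exact finrank_bot ℂ E
        have := hV i
        omega
    obtain ⟨v, hv⟩ := pbh_avoid _ hne
    have hvW : v ∉ W := hv none
    have hv0 : v ≠ 0 := fun h => hvW (h ▸ W.zero_mem)
    have hinf : W ⊓ span ℂ {v} = ⊥ := by
      rw [eq_bot_iff]
      rintro x ⟨hxW, hxv⟩
      obtain ⟨c, rfl⟩ := mem_span_singleton.mp hxv
      rcases eq_or_ne c 0 with rfl | hc
      · simp
      · exact absurd ((W.smul_mem_iff hc).mp hxW) hvW
    refine ⟨W ⊔ span ℂ {v}, ?_, ?_⟩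
    · have h1 := Submodule.finrank_sup_add_finrank_inf_eq W (span ℂ {v})
      rw [hinf, hWrank, finrank_span_singleton hv0] at h1
      have h2 : finrank ℂ ((⊥ : Submodule ℂ E)) = 0 := finrank_bot ℂ E
      omega
    · intro i
      rw [eq_bot_iff]
      rintro x ⟨hxWv, hxVi⟩
      obtain ⟨w, hw, y, hy, rfl⟩ := mem_sup.mp hxWv
      obtain ⟨c, rfl⟩ := mem_span_singleton.mp hy
      rcases eq_or_ne c 0 with rfl | hc
      · have : w ∈ W ⊓ V i := ⟨hw, by simpa using hxVi⟩
        rw [hWV i] at this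
        simpa using this
      · exfalso
        apply hv (some i)
        have hvmem : v = c⁻¹ • ((w + c • v) - w) := by
          rw [add_sub_cancel_left, smul_smul, inv_mul_cancel₀ hc, one_smul]
        rw [hvmem]
        have : (w + c • v) - w ∈ W ⊔ V i :=
          Submodule.sub_mem _ (le_sup_right (α := Submodule ℂ E) hxVi)
            (le_sup_left (α := Submodule ℂ E) hw)
        exact Submodule.smul_mem _ _ this

/-- Padding map `ℂ^r → ℂ^m` for `r ≤ m`. -/
noncomputable def pbh_pad (r m : ℕ) : ((Fin r → ℂ) →ₗ[ℂ] (Fin m → ℂ)) where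
  toFun x := fun i => if h : (i : ℕ) < r then x ⟨i, h⟩ else 0
  map_add' x y := by funext i; by_cases h : (i : ℕ) < r <;> simp [h]
  map_smul' c x := by funext i; by_cases h : (i : ℕ) < r <;> simp [h]

lemma pbh_pad_injective (r m : ℕ) (hrm : r ≤ m) :
    Function.Injective (pbh_pad r m) := by
  intro x y hxy
  funext j
  have := congrFun hxy ⟨(j : ℕ), lt_of_lt_of_le j.2 hrm⟩
  simpa [pbh_pad, j.2] using this

lemma pbh_ker_eq_eigenspace (n : ℕ) (A : Matrix (Fin n) (Fin n) ℂ) (l : ℂ) :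
    LinearMap.ker ((l • (1 : Matrix (Fin n) (Fin n) ℂ) - A).mulVecLin)
      = Module.End.eigenspace (A.mulVecLin) l := by
  ext x
  rw [LinearMap.mem_ker, Module.End.mem_eigenspace_iff, Matrix.mulVecLin_apply,
    Matrix.mulVecLin_apply, Matrix.sub_mulVec, Matrix.smul_mulVec,
    Matrix.one_mulVec, sub_eq_zero]
  constructor
  · intro h; exact h.symm
  · intro h; exact h.symm

end Aux

/-- A complex matrix has full column rank iff `mulVec` is injective. -/
def FullColRank {m n : Type*} [Fintype n] (M : Matrix m n ℂ) : Prop :=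
  ∀ x : n → ℂ, M.mulVec x = 0 → x = 0

/-- PBH observability: col(λI − A, C) has full column rank for every λ ∈ ℂ. -/
def Observable {n m : Type*} [Fintype n] [DecidableEq n]
    (A : Matrix n n ℂ) (C : Matrix m n ℂ) : Prop :=
  ∀ l : ℂ, FullColRank (Matrix.fromRows (l • (1 : Matrix n n ℂ) - A) C)

/-- there exists C ∈ ℂ^{m×n} with (A, C) PBH-observable iff
m ≥ p_max, the maximum geometric multiplicity of the eigenvalues of A. -/
theorem stmt17 (n m : ℕ) (A : Matrix (Fin n) (Fin n) ℂ) (pmax : ℕ)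
    (hpmax : IsGreatest
      {k : ℕ | ∃ l : ℂ, k = Module.finrank ℂ
        (LinearMap.ker ((l • (1 : Matrix (Fin n) (Fin n) ℂ) - A).mulVecLin))} pmax) :
    (∃ C : Matrix (Fin m) (Fin n) ℂ, Observable A C) ↔ pmax ≤ m := by
  constructor
  · rintro ⟨C, hC⟩
    obtain ⟨l, hl⟩ := hpmax.1
    rw [hl]
    set V := LinearMap.ker ((l • (1 : Matrix (Fin n) (Fin n) ℂ) - A).mulVecLin) with hV
    have hg : Function.Injective ((C.mulVecLin).comp V.subtype) := by
      rw [← LinearMap.ker_eq_bot, eq_bot_iff]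
      rintro ⟨x, hx⟩ hker
      simp only [LinearMap.mem_ker, LinearMap.comp_apply, Submodule.subtype_apply,
        Matrix.mulVecLin_apply] at hker
      have hx' : (l • (1 : Matrix (Fin n) (Fin n) ℂ) - A).mulVec x = 0 := hx
      have h0 : (Matrix.fromRows (l • (1 : Matrix (Fin n) (Fin n) ℂ) - A) C).mulVec x = 0 := by
        rw [Matrix.fromRows_mulVec, hx', hker]
        funext i
        cases i <;> rfl
      have := hC l x h0
      simp [this]
    have := LinearMap.finrank_le_finrank_of_injective hg
    rwa [Module.finrank_fin_fun ℂ] at this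
  · intro hm
    classical
    set f : Module.End ℂ (Fin n → ℂ) := A.mulVecLin with hf
    have hfin : Set.Finite f.HasEigenvalue := Module.End.finite_hasEigenvalue f
    haveI : Finite {l : ℂ // f.HasEigenvalue l} := hfin.to_subtype
    set V : {l : ℂ // f.HasEigenvalue l} → Submodule ℂ (Fin n → ℂ) :=
      fun i => Module.End.eigenspace f i.1 with hVdef
    have hVle : ∀ l : ℂ, Module.finrank ℂ (Module.End.eigenspace f l) ≤ pmax := by
      intro l
      have := hpmax.2 ⟨l, rfl⟩
      rwa [pbh_ker_eq_eigenspace] at this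
    have hE : Module.finrank ℂ (Fin n → ℂ) = n := Module.finrank_fin_fun ℂ
    obtain ⟨W, hWrank, hWV⟩ := pbh_buildW V (n - m)
      (by omega)
      (by
        intro i
        have h1 : Module.finrank ℂ (V i) ≤ pmax := hVle i.1
        have h2 : Module.finrank ℂ (V i) ≤ Module.finrank ℂ (Fin n → ℂ) :=
          Submodule.finrank_le _
        rw [hE] at h2 ⊢
        omega)
    -- V l ⊓ W = ⊥ for every l : ℂ
    have hWall : ∀ l : ℂ, W ⊓ Module.End.eigenspace f l = ⊥ := by
      intro l
      by_cases h : f.HasEigenvalue l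
      · exact hWV ⟨l, h⟩
      · have : Module.End.eigenspace f l = ⊥ := by
          by_contra hne
          exact h (Module.End.hasEigenvalue_iff.mpr hne)
        rw [this, inf_bot_eq]
    -- build the map
    have hrq : Module.finrank ℂ ((Fin n → ℂ) ⧸ W) + (n - m) = n := by
      have := Submodule.finrank_quotient_add_finrank W
      rw [hE, hWrank] at this
      omega
    have hrm : Module.finrank ℂ ((Fin n → ℂ) ⧸ W) ≤ m := by omega
    set r := Module.finrank ℂ ((Fin n → ℂ) ⧸ W) with hr
    let e : ((Fin n → ℂ) ⧸ W) ≃ₗ[ℂ] (Fin r → ℂ) := (Module.finBasis ℂ _).equivFun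
    let g : (Fin n → ℂ) →ₗ[ℂ] (Fin m → ℂ) :=
      (pbh_pad r m) ∘ₗ (e.toLinearMap ∘ₗ W.mkQ)
    have hkerg : ∀ x, g x = 0 → x ∈ W := by
      intro x hx
      simp only [g, LinearMap.comp_apply] at hx
      have h1 := pbh_pad_injective r m hrm (by simpa using hx : pbh_pad r m (e (W.mkQ x)) = pbh_pad r m 0)
      have h2 : W.mkQ x = 0 := e.injective (by simpa using h1)
      rwa [← LinearMap.mem_ker, Submodule.ker_mkQ] at h2
    refine ⟨LinearMap.toMatrix' g, ?_⟩
    intro l x hx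
    have hA : (l • (1 : Matrix (Fin n) (Fin n) ℂ) - A).mulVec x = 0 := by
      funext i
      have := congrFun hx (Sum.inl i)
      rwa [Matrix.fromRows_mulVec] at this
    have hCx : (LinearMap.toMatrix' g).mulVec x = 0 := by
      funext i
      have := congrFun hx (Sum.inr i)
      rwa [Matrix.fromRows_mulVec] at this
    have hgx : g x = 0 := by
      rw [← Matrix.toLin'_apply (LinearMap.toMatrix' g) x, Matrix.toLin'_toMatrix'] at hCx
      exact hCx
    have hxW : x ∈ W := hkerg x hgx
    have hxV : x ∈ Module.End.eigenspace f l := by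
      rw [← pbh_ker_eq_eigenspace]
      exact hA
    have : x ∈ W ⊓ Module.End.eigenspace f l := ⟨hxW, hxV⟩
    rw [hWall l] at this
    simpa using this
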